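/- In a finite Dung argumentation framework, every stable extension is a semi-stable extension. -/
import Mathlib

def conflictFree {Args : Type*} (R : Args → Args → Prop) (B : Set Args) : Prop :=
  ∀ a ∈ B, ∀ b ∈ B, ¬ R a b

def defends {Args : Type*} (R : Args → Args → Prop) (B : Set Args) (b : Args) : Prop :=
  ∀ a, R a b → ∃ c ∈ B, R c a

def admissible {Args : Type*} (R : Args → Args → Prop) (B : Set Args) : Prop :=
  conflictFree R B ∧ ∀ b ∈ B, defends R B b

def complete {Args : Type*} (R : Args → Args → Prop) (B : Set Args) : Prop :=
  admissible R B ∧ ∀ b, defends R B b → b ∈ B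

def plusSet {Args : Type*} (R : Args → Args → Prop) (B : Set Args) : Set Args :=
  {a | ∃ b ∈ B, R b a}

def stable {Args : Type*} (R : Args → Args → Prop) (B : Set Args) : Prop :=
  conflictFree R B ∧ B ∪ plusSet R B = Set.univ

def semiStable {Args : Type*} (R : Args → Args → Prop) (B : Set Args) : Prop :=
  complete R B ∧
    ∀ C, complete R C → (B ∪ plusSet R B) ⊆ (C ∪ plusSet R C) →
      (B ∪ plusSet R B) = (C ∪ plusSet R C)

theorem stable_is_semiStable
    {Args : Type*} [Fintype Args] (R : Args → Args → Prop) (B : Set Args)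
    (h : stable R B) : semiStable R B := by
  obtain ⟨hcf, huniv⟩ := h
  have hnotB : ∀ a, a ∉ B → a ∈ plusSet R B := by
    intro a ha
    have : a ∈ B ∪ plusSet R B := huniv ▸ Set.mem_univ a
    rcases this with h' | h'
    · exact absurd h' ha
    · exact h'
  refine ⟨⟨⟨hcf, ?_⟩, ?_⟩, ?_⟩
  · intro b hb a hab
    have ha : a ∉ B := fun haB => hcf a haB b hb hab
    exact hnotB a ha
  · intro b hdef
    by_contra hb
    obtain ⟨c, hc, hcb⟩ := hnotB b hb
    obtain ⟨d, hd, hdc⟩ := hdef c hcb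
    exact hcf d hd c hc hdc
  · intro C _ hsub
    rw [huniv] at hsub ⊢
    exact (Set.univ_subset_iff.mp hsub).symm
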